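/- Let u, v be complex numbers on the unit circle, both different from 1. Let a = v - u⁻¹, b = u⁻¹ - 1, d = v - 1, and define Q = (1/(4i))·( b·conj(a) - a·conj(b) - v·b·conj(a) + a·conj(v·b) ). Then Q is a real number, Q > 0 if arg(u) + arg(v) < 2π, and Q < 0 if arg(u) + arg(v) > 2π, where arg takes values in (0, 2π). -/

import Mathlib

open Real Complex

/-- Argument of a complex number normalized to lie in `[0, 2π)`;
for a unit complex number different from `1` it lies in `(0, 2π)`. -/
noncomputable def arg2pi (z : ℂ) : ℝ :=
  if 0 ≤ Complex.arg z then Complex.arg z else Complex.arg z + 2 * π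

lemma arg2pi_props {z : ℂ} (hz : ‖z‖ = 1) (hz1 : z ≠ 1) :
    0 < arg2pi z ∧ arg2pi z < 2 * π ∧ Real.sin (arg2pi z) = z.im ∧
      Real.cos (arg2pi z) = z.re := by
  have hz0 : z ≠ 0 := by intro h; simp [h] at hz
  have habs : ‖z‖ = 1 := hz
  have harg0 : Complex.arg z ≠ 0 := by
    intro h
    apply hz1
    have := Complex.norm_mul_exp_arg_mul_I z
    rw [h, habs] at this
    simpa using this.symm
  have hsin : Real.sin (Complex.arg z) = z.im := by
    rw [Complex.sin_arg, habs, div_one]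
  have hcos : Real.cos (Complex.arg z) = z.re := by
    rw [Complex.cos_arg hz0, habs, div_one]
  have hle : Complex.arg z ≤ π := Complex.arg_le_pi z
  have hgt : -π < Complex.arg z := Complex.neg_pi_lt_arg z
  have hpi : (0:ℝ) < π := Real.pi_pos
  unfold arg2pi
  split_ifs with h
  · exact ⟨lt_of_le_of_ne h (Ne.symm harg0), by linarith, hsin, hcos⟩
  · push_neg at h
    exact ⟨by linarith, by linarith, by rw [Real.sin_add_two_pi]; exact hsin,
      by rw [Real.cos_add_two_pi]; exact hcos⟩

lemma sin_factor (x y : ℝ) :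
    Real.sin x + Real.sin y - Real.sin (x + y) =
      4 * Real.sin (x/2) * Real.sin (y/2) * Real.sin ((x+y)/2) := by
  have h1 : Real.sin x = 2 * Real.sin (x/2) * Real.cos (x/2) := by
    rw [← Real.sin_two_mul]; ring_nf
  have h2 : Real.sin y = 2 * Real.sin (y/2) * Real.cos (y/2) := by
    rw [← Real.sin_two_mul]; ring_nf
  have h3 : Real.sin (x + y) = 2 * Real.sin (x/2 + y/2) * Real.cos (x/2 + y/2) := by
    rw [← Real.sin_two_mul]; ring_nf
  have ps := Real.sin_sq_add_cos_sq (x/2)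
  have pt := Real.sin_sq_add_cos_sq (y/2)
  rw [h1, h2, h3, Real.sin_add, Real.cos_add,
    show (x+y)/2 = x/2 + y/2 by ring, Real.sin_add]
  linear_combination (-2*Real.sin (x/2)*Real.cos (x/2)) * pt +
    (-2*Real.sin (y/2)*Real.cos (y/2)) * ps

theorem hodge_form_sign_on_Ha (u v : ℂ) (hu : ‖u‖ = 1) (hv : ‖v‖ = 1)
    (hu1 : u ≠ 1) (hv1 : v ≠ 1) :
    let a : ℂ := v - u⁻¹
    let b : ℂ := u⁻¹ - 1
    let d : ℂ := v - 1
    let Q : ℂ := (1 / (4 * Complex.I)) *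
      (b * (starRingEnd ℂ) a - a * (starRingEnd ℂ) b
        - v * b * (starRingEnd ℂ) a + a * (starRingEnd ℂ) (v * b))
    Q.im = 0 ∧
    (arg2pi u + arg2pi v < 2 * π → 0 < Q.re) ∧
    (2 * π < arg2pi u + arg2pi v → Q.re < 0) := by
  intro a b d Q
  obtain ⟨hα0, hα2, hαs, hαc⟩ := arg2pi_props hu hu1
  obtain ⟨hβ0, hβ2, hβs, hβc⟩ := arg2pi_props hv hv1
  set α := arg2pi u with hαdef
  set β := arg2pi v with hβdef
  have huinv : u⁻¹ = (starRingEnd ℂ) u := Complex.inv_eq_conj hu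
  have hun : u.re ^ 2 + u.im ^ 2 = 1 := by
    have h1 := Complex.normSq_apply u
    have h2 : Complex.normSq u = 1 := by
      rw [Complex.normSq_eq_norm_sq]; rw [show ‖u‖ = 1 from hu]; norm_num
    nlinarith [h1, h2]
  have hvn : v.re ^ 2 + v.im ^ 2 = 1 := by
    have h1 := Complex.normSq_apply v
    have h2 : Complex.normSq v = 1 := by
      rw [Complex.normSq_eq_norm_sq]; rw [show ‖v‖ = 1 from hv]; norm_num
    nlinarith [h1, h2]
  have h4I : (4 : ℂ) * Complex.I ≠ 0 := by simp [Complex.I_ne_zero]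
  have hQ : Q = ((Real.sin α + Real.sin β - Real.sin (α + β) : ℝ) : ℂ) := by
    show (1 / (4 * Complex.I)) *
      ((u⁻¹ - 1) * (starRingEnd ℂ) (v - u⁻¹) - (v - u⁻¹) * (starRingEnd ℂ) (u⁻¹ - 1)
        - v * (u⁻¹ - 1) * (starRingEnd ℂ) (v - u⁻¹)
        + (v - u⁻¹) * (starRingEnd ℂ) (v * (u⁻¹ - 1))) = _
    rw [huinv, Real.sin_add, hαs, hβs, hαc, hβc, one_div, inv_mul_eq_div,
      div_eq_iff h4I]
    apply Complex.ext
    · simp only [map_sub, map_mul, map_one, Complex.conj_conj, Complex.mul_re,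
        Complex.mul_im, Complex.sub_re, Complex.sub_im, Complex.add_re, Complex.add_im,
        Complex.one_re, Complex.one_im, Complex.conj_re, Complex.conj_im,
        Complex.ofReal_re, Complex.ofReal_im, Complex.I_re, Complex.I_im,
        Complex.re_ofNat, Complex.im_ofNat]
      ring
    · simp only [map_sub, map_mul, map_one, Complex.conj_conj, Complex.mul_re,
        Complex.mul_im, Complex.sub_re, Complex.sub_im, Complex.add_re, Complex.add_im,
        Complex.one_re, Complex.one_im, Complex.conj_re, Complex.conj_im,
        Complex.ofReal_re, Complex.ofReal_im, Complex.I_re, Complex.I_im,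
        Complex.re_ofNat, Complex.im_ofNat]
      linear_combination (2*v.im)*hun + (2*u.im)*hvn
  rw [hQ]
  have hfac := sin_factor α β
  have hsα : 0 < Real.sin (α / 2) :=
    Real.sin_pos_of_pos_of_lt_pi (by linarith) (by linarith)
  have hsβ : 0 < Real.sin (β / 2) :=
    Real.sin_pos_of_pos_of_lt_pi (by linarith) (by linarith)
  refine ⟨Complex.ofReal_im _, ?_, ?_⟩
  · intro h
    have hs : 0 < Real.sin ((α + β) / 2) :=
      Real.sin_pos_of_pos_of_lt_pi (by linarith) (by linarith)
    have hp : 0 < 4 * Real.sin (α / 2) * Real.sin (β / 2) * Real.sin ((α + β) / 2) := by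
      have := mul_pos (mul_pos (mul_pos (by norm_num : (0:ℝ) < 4) hsα) hsβ) hs
      linarith
    rw [Complex.ofReal_re]
    linarith
  · intro h
    have hs : Real.sin ((α + β) / 2) < 0 := by
      have h1 : Real.sin ((α + β) / 2 - π) = -Real.sin ((α + β) / 2) := Real.sin_sub_pi _
      have hp : 0 < Real.sin ((α + β) / 2 - π) :=
        Real.sin_pos_of_pos_of_lt_pi (by linarith) (by linarith)
      linarith
    have hp : 4 * Real.sin (α / 2) * Real.sin (β / 2) * Real.sin ((α + β) / 2) < 0 := by
      have := mul_neg_of_pos_of_neg (mul_pos (mul_pos (by norm_num : (0:ℝ) < 4) hsα) hsβ) hs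
      linarith
    rw [Complex.ofReal_re]
    linarith
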